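/- Let G = (V, E) be a finite simple graph and let k ≥ 3 be an integer. Let G⁺ be the graph obtained from G by adding k pairwise disjoint new cliques H₁,…,H_k, each on k+2 new vertices, adding every edge between a vertex of V and a new vertex, and adding no edges between distinct cliques H_i and H_j; and let P(G⁺) be the profile constructed from G⁺. Then the votes of P(G⁺) can be partitioned into k subprofiles, each of which is value-restricted, if and only if V can be partitioned into k cliques of G. -/

import Mathlib

/-! The construction `P(H)`: the vertex set of the graph `H` is a finite linearly
ordered type `W` (the linear order is the enumeration `u₁, …, u_n` of the vertices).
For each non-adjacent pair `p = (u_i, u_j)` with `u_i < u_j` there is a triple of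
candidates `a^{i,j}, b^{i,j}, c^{i,j}`, encoded as `(p, 0), (p, 1), (p, 2)`. -/

/-- The non-adjacent pairs `(u_i, u_j)` with `i < j` of the graph `H`. -/
abbrev NonEdge {W : Type*} [LinearOrder W] (H : SimpleGraph W) : Type _ :=
  {p : W × W // p.1 < p.2 ∧ ¬ H.Adj p.1 p.2}

/-- The candidate set of the profile `P(H)`: a triple of candidates
`a^{i,j} = (p, 0)`, `b^{i,j} = (p, 1)`, `c^{i,j} = (p, 2)` for each non-edge `p`. -/
abbrev Cand {W : Type*} [LinearOrder W] (H : SimpleGraph W) : Type _ :=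
  NonEdge H × Fin 3

/-- The position (0 = first, 1 = second, 2 = third) that voter `ℓ` assigns to the
candidate `(e, t)` within its triple: voter `u_i` ranks `a ≻ b ≻ c`, voter `u_j`
ranks `b ≻ c ≻ a`, and every other voter ranks `c ≻ a ≻ b`, where `e = (u_i, u_j)`. -/
def localRank {W : Type*} [LinearOrder W] {H : SimpleGraph W}
    (ℓ : W) (e : NonEdge H) (t : Fin 3) : ℕ :=
  if ℓ = e.val.1 then t.val
  else if ℓ = e.val.2 then (t.val + 2) % 3
  else (t.val + 1) % 3

/-- The vote `v_ℓ` of the profile `P(H)`, as the strict linear order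
`voteRel H ℓ x y` meaning "voter `ℓ` ranks candidate `x` above candidate `y`":
triples are ordered lexicographically by their non-edge, and within a triple
candidates are ordered according to `localRank`. -/
def voteRel {W : Type*} [LinearOrder W] (H : SimpleGraph W)
    (ℓ : W) (x y : Cand H) : Prop :=
  (x.1.val.1 < y.1.val.1 ∨ (x.1.val.1 = y.1.val.1 ∧ x.1.val.2 < y.1.val.2)) ∨
  (x.1 = y.1 ∧ localRank ℓ x.1 x.2 < localRank ℓ y.1 y.2)

/-- `PosOf i v x y z` says that candidate `x` is ranked in the `i`-th position
(for `i ∈ {1,2,3}`) in the restriction of the vote `v` to the triple `{x, y, z}`. -/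
def PosOf {C : Type*} (i : ℕ) (v : C → C → Prop) (x y z : C) : Prop :=
  match i with
  | 1 => v x y ∧ v x z
  | 2 => (v y x ∧ v x z) ∨ (v z x ∧ v x y)
  | 3 => v y x ∧ v z x
  | _ => False

/-- The subprofile of the profile `(vote p)_{p}` given by the index set `S`
contains an `i`-minor. -/
def HasIMinorOn {ι C : Type*} (i : ℕ) (vote : ι → C → C → Prop) (S : Set ι) : Prop :=
  ∃ p ∈ S, ∃ q ∈ S, ∃ r ∈ S, p ≠ q ∧ p ≠ r ∧ q ≠ r ∧
    ∃ a b c : C, a ≠ b ∧ a ≠ c ∧ b ≠ c ∧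
      PosOf i (vote p) a b c ∧ PosOf i (vote q) b a c ∧ PosOf i (vote r) c a b

/-- The graph `G⁺` obtained from `G` by adding `k` pairwise disjoint new cliques,
each on `k + 2` new vertices, adding every edge between an old vertex and a new
vertex, and adding no edges between distinct new cliques. -/
def GPlus {V : Type*} (G : SimpleGraph V) (k : ℕ) :
    SimpleGraph (V ⊕ (Fin k × Fin (k + 2))) where
  Adj x y :=
    match x, y with
    | Sum.inl a, Sum.inl b => G.Adj a b
    | Sum.inl _, Sum.inr _ => True
    | Sum.inr _, Sum.inl _ => True
    | Sum.inr p, Sum.inr q => p.1 = q.1 ∧ p.2 ≠ q.2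
  symm := ⟨by
    rintro (a | p) (b | q) h
    · exact G.adj_symm h
    · trivial
    · trivial
    · exact ⟨h.1.symm, h.2.symm⟩⟩
  loopless := ⟨by
    rintro (a | p) h
    · exact G.irrefl h
    · exact h.2 rfl⟩

/-- The vertex set of `G` can be partitioned into `k` (possibly empty) sets, each of
which induces a complete subgraph. -/
def CliquePartition {V : Type*} (G : SimpleGraph V) (k : ℕ) : Prop :=
  ∃ f : V → Fin k, ∀ x y : V, f x = f y → x ≠ y → G.Adj x y

section Aux
variable {W : Type*} [LinearOrder W] {H : SimpleGraph W}

lemma eq_fst_of_opp {ℓ₁ ℓ₂ : W} {x y : Cand H}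
    (h1 : voteRel H ℓ₁ x y) (h2 : voteRel H ℓ₂ y x) : x.1 = y.1 := by
  rcases h1 with (h1 | ⟨h1, h1'⟩) | ⟨h1, _⟩
  · rcases h2 with (h2 | ⟨h2, h2'⟩) | ⟨h2, _⟩
    · exact absurd h2 (lt_asymm h1)
    · exact absurd h2 (ne_of_gt h1)
    · exact h2.symm
  · rcases h2 with (h2 | ⟨h2, h2'⟩) | ⟨h2, _⟩
    · exact absurd h1 (ne_of_gt h2)
    · exact absurd h2' (lt_asymm h1')
    · exact h2.symm
  · exact h1

lemma voteRel_trans {ℓ : W} {x y z : Cand H}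
    (h1 : voteRel H ℓ x y) (h2 : voteRel H ℓ y z) : voteRel H ℓ x z := by
  rcases h1 with (h1 | ⟨h1, h1'⟩) | ⟨h1, h1'⟩
  · rcases h2 with (h2 | ⟨h2, h2'⟩) | ⟨h2, h2'⟩
    · exact Or.inl (Or.inl (h1.trans h2))
    · exact Or.inl (Or.inl (h2 ▸ h1))
    · exact Or.inl (Or.inl (h2 ▸ h1))
  · rcases h2 with (h2 | ⟨h2, h2'⟩) | ⟨h2, h2'⟩
    · exact Or.inl (Or.inl (h1 ▸ h2))
    · exact Or.inl (Or.inr ⟨h1.trans h2, h1'.trans h2'⟩)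
    · have e1 : y.1.val = z.1.val := congrArg Subtype.val h2
      exact Or.inl (Or.inr ⟨h1.trans (congrArg Prod.fst e1), (congrArg Prod.snd e1) ▸ h1'⟩)
  · rcases h2 with (h2 | ⟨h2, h2'⟩) | ⟨h2, h2'⟩
    · have e1 : x.1.val = y.1.val := congrArg Subtype.val h1
      exact Or.inl (Or.inl ((congrArg Prod.fst e1) ▸ h2))
    · have e1 : x.1.val = y.1.val := congrArg Subtype.val h1
      exact Or.inl (Or.inr ⟨(congrArg Prod.fst e1).trans h2, (congrArg Prod.snd e1) ▸ h2'⟩)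
    · exact Or.inr ⟨h1.trans h2, (h1 ▸ h1' : _ < localRank ℓ y.1 y.2).trans h2'⟩

lemma lrlt {ℓ : W} {x y : Cand H} {e : NonEdge H}
    (h : voteRel H ℓ x y) (hx : x.1 = e) (hy : y.1 = e) :
    localRank ℓ e x.2 < localRank ℓ e y.2 := by
  rcases h with (h | ⟨h, h'⟩) | ⟨h, h'⟩
  · rw [hx, hy] at h; exact absurd h (lt_irrefl _)
  · rw [hx, hy] at h'; exact absurd h' (lt_irrefl _)
  · rw [hx, hy] at h'; exact h'

lemma lr_other {ℓ : W} {e : NonEdge H} (h1 : ℓ ≠ e.val.1) (h2 : ℓ ≠ e.val.2)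
    (t : Fin 3) : localRank ℓ e t = (t.val + 1) % 3 := by
  simp [localRank, h1, h2]

lemma posOf_swap {C : Type*} {i : ℕ} {v : C → C → Prop} {x y z : C}
    (h : PosOf i v x y z) : PosOf i v x z y := by
  rcases i with _ | _ | _ | _ | i <;> simp only [PosOf] at h ⊢ <;> tauto

lemma pair_contra {ℓ₁ ℓ₂ : W} {x y z : Cand H} {e : NonEdge H}
    (hx : x.1 = e) (hy : y.1 = e) (hz : z.1 = e)
    (hlr : ∀ t, localRank ℓ₁ e t = localRank ℓ₂ e t)
    {j : ℕ} (hj : j = 1 ∨ j = 2 ∨ j = 3)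
    (h1 : PosOf j (voteRel H ℓ₁) x y z) (h2 : PosOf j (voteRel H ℓ₂) y x z) :
    False := by
  rcases hj with rfl | rfl | rfl
  · have a1 := lrlt h1.1 hx hy
    have a2 := lrlt h2.1 hy hx
    simp only [← hlr] at a2
    omega
  · rcases h1 with ⟨g1, g2⟩ | ⟨g1, g2⟩ <;> rcases h2 with ⟨g3, g4⟩ | ⟨g3, g4⟩ <;>
    [ (have a1 := lrlt g1 hy hx; have a2 := lrlt g2 hx hz;
       have a3 := lrlt g3 hx hy; have a4 := lrlt g4 hy hz);
      (have a1 := lrlt g1 hy hx; have a2 := lrlt g2 hx hz;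
       have a3 := lrlt g3 hz hy; have a4 := lrlt g4 hy hx);
      (have a1 := lrlt g1 hz hx; have a2 := lrlt g2 hx hy;
       have a3 := lrlt g3 hx hy; have a4 := lrlt g4 hy hz);
      (have a1 := lrlt g1 hz hx; have a2 := lrlt g2 hx hy;
       have a3 := lrlt g3 hz hy; have a4 := lrlt g4 hy hx)] <;>
    simp only [← hlr] at a3 a4 <;> omega
  · have a1 := lrlt h1.1 hy hx
    have a2 := lrlt h2.1 hx hy
    simp only [← hlr] at a2
    omega

/-- Lemma A: three distinct voters in `S`, two of them a non-edge, give a 1-minor. -/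
lemma exists_minor_of_lt {S : Set W} {u v w : W} (hu : u ∈ S) (hv : v ∈ S) (hw : w ∈ S)
    (huv : u ≠ v) (huw : u ≠ w) (hvw : v ≠ w) (hlt : u < v) (hadj : ¬ H.Adj u v) :
    HasIMinorOn 1 (voteRel H) S := by
  set e : NonEdge H := ⟨(u, v), hlt, hadj⟩ with he
  have hvu : v ≠ u := huv.symm
  have hwu : w ≠ u := huw.symm
  have hwv : w ≠ v := hvw.symm
  have e1 : e.val.1 = u := rfl
  have e2 : e.val.2 = v := rfl
  have lru : ∀ t : Fin 3, localRank u e t = t.val := by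
    intro t; simp [localRank, e1]
  have lrv : ∀ t : Fin 3, localRank v e t = (t.val + 2) % 3 := by
    intro t; simp [localRank, e1, e2, hvu]
  have lrw : ∀ t : Fin 3, localRank w e t = (t.val + 1) % 3 := by
    intro t; simp [localRank, e1, e2, hwu, hwv]
  have mk : ∀ (ℓ : W) (s t : Fin 3), localRank ℓ e s < localRank ℓ e t →
      voteRel H ℓ (e, s) (e, t) := fun ℓ s t h => Or.inr ⟨rfl, h⟩
  refine ⟨u, hu, v, hv, w, hw, huv, huw, hvw, (e, 0), (e, 1), (e, 2),
    by simp, by simp, by simp, ?_, ?_, ?_⟩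
  · exact ⟨mk u 0 1 (by rw [lru, lru]; decide), mk u 0 2 (by rw [lru, lru]; decide)⟩
  · exact ⟨mk v 1 0 (by rw [lrv, lrv]; decide), mk v 1 2 (by rw [lrv, lrv]; decide)⟩
  · exact ⟨mk w 2 0 (by rw [lrw, lrw]; decide), mk w 2 1 (by rw [lrw, lrw]; decide)⟩

lemma exists_minor {S : Set W} {u v w : W} (hu : u ∈ S) (hv : v ∈ S) (hw : w ∈ S)
    (huv : u ≠ v) (huw : u ≠ w) (hvw : v ≠ w) (hadj : ¬ H.Adj u v) :
    HasIMinorOn 1 (voteRel H) S := by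
  rcases lt_or_gt_of_ne huv with h | h
  · exact exists_minor_of_lt hu hv hw huv huw hvw h hadj
  · exact exists_minor_of_lt hv hu hw huv.symm hvw huw h
      (fun hA => hadj (H.adj_symm hA))

/-- Lemma B: a clique is value-restricted. -/
lemma no_minor_of_clique {S : Set W} (hS : ∀ x ∈ S, ∀ y ∈ S, x ≠ y → H.Adj x y)
    {j : ℕ} (hj : j = 1 ∨ j = 2 ∨ j = 3) : ¬ HasIMinorOn j (voteRel H) S := by
  rintro ⟨p, hp, q, hq, r, hr, hpq, hpr, hqr, a, b, c, hab, hac, hbc, Pa, Pb, Pc⟩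
  -- Step 1: all three candidates lie in the same triple.
  obtain ⟨eab, eac⟩ : a.1 = b.1 ∧ a.1 = c.1 := by
    rcases hj with rfl | rfl | rfl
    · exact ⟨eq_fst_of_opp Pa.1 Pb.1, eq_fst_of_opp Pa.2 Pc.1⟩
    · rcases Pa with ⟨h1, h2⟩ | ⟨h1, h2⟩ <;> rcases Pb with ⟨h3, h4⟩ | ⟨h3, h4⟩ <;>
        rcases Pc with ⟨h5, h6⟩ | ⟨h5, h6⟩
      · exact ⟨eq_fst_of_opp h3 h1,
          (eq_fst_of_opp h3 h1).trans (eq_fst_of_opp (voteRel_trans h1 h2) h6)⟩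
      · exact ⟨eq_fst_of_opp h3 h1, eq_fst_of_opp h2 h6⟩
      · have hac' := eq_fst_of_opp h2 (voteRel_trans h3 h4)
        exact ⟨hac'.trans (eq_fst_of_opp (voteRel_trans h1 h2) h6).symm, hac'⟩
      · have hac' := eq_fst_of_opp h2 h6
        exact ⟨hac'.trans (eq_fst_of_opp h5 h3).symm, hac'⟩
      · have hac' := eq_fst_of_opp (voteRel_trans h3 h4) h1
        exact ⟨hac'.trans (eq_fst_of_opp h4 (voteRel_trans h1 h2)).symm, hac'⟩
      · exact ⟨eq_fst_of_opp h2 (voteRel_trans h5 h6),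
          eq_fst_of_opp (voteRel_trans h3 h4) h1⟩
      · exact ⟨eq_fst_of_opp h2 h4, eq_fst_of_opp h5 h1⟩
      · have hab' := eq_fst_of_opp h2 h4
        exact ⟨hab', hab'.trans (eq_fst_of_opp h5 h3)⟩
    · exact ⟨eq_fst_of_opp Pb.1 Pa.1, eq_fst_of_opp Pc.1 Pa.2⟩
  set e := a.1 with hedef
  -- the two endpoints of `e` cannot both be in `S`
  have hspec : ∀ x ∈ S, ∀ y ∈ S, x ≠ y → (x = e.val.1 ∨ x = e.val.2) →
      (y = e.val.1 ∨ y = e.val.2) → False := by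
    rintro x hx y hy hxy (rfl | rfl) (rfl | rfl)
    · exact hxy rfl
    · exact e.prop.2 (hS _ hx _ hy hxy)
    · exact e.prop.2 (H.adj_symm (hS _ hx _ hy hxy))
    · exact hxy rfl
  -- find two voters not incident to `e`
  have hmain : ∀ ℓ₁ ℓ₂ : W,
      (ℓ₁ ≠ e.val.1 ∧ ℓ₁ ≠ e.val.2) → (ℓ₂ ≠ e.val.1 ∧ ℓ₂ ≠ e.val.2) →
      ∀ t, localRank ℓ₁ e t = localRank ℓ₂ e t := by
    intro ℓ₁ ℓ₂ h₁ h₂ t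
    rw [lr_other h₁.1 h₁.2, lr_other h₂.1 h₂.2]
  by_cases sp : p = e.val.1 ∨ p = e.val.2
  · by_cases sq : q = e.val.1 ∨ q = e.val.2
    · exact hspec p hp q hq hpq sp sq
    · by_cases sr : r = e.val.1 ∨ r = e.val.2
      · exact hspec p hp r hr hpr sp sr
      · -- q and r are both non-special
        push_neg at sq sr
        exact pair_contra (x := b) (y := c) (z := a) eab.symm eac.symm rfl
          (hmain q r sq sr) hj (posOf_swap Pb) (posOf_swap Pc)
  · by_cases sq : q = e.val.1 ∨ q = e.val.2
    · by_cases sr : r = e.val.1 ∨ r = e.val.2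
      · exact hspec q hq r hr hqr sq sr
      · -- p and r non-special
        push_neg at sp sr
        exact pair_contra (x := a) (y := c) (z := b) rfl eac.symm eab.symm
          (hmain p r sp sr) hj (posOf_swap Pa) Pc
    · -- p and q non-special
      push_neg at sp sq
      exact pair_contra (x := a) (y := b) (z := c) rfl eab.symm eac.symm
        (hmain p q sp sq) hj Pa Pb

end Aux

/-- For `k ≥ 3` and any enumeration (linear order) of the vertices of `G⁺`, the
votes of the profile `P(G⁺)` can be partitioned into `k` subprofiles, each
value-restricted (containing no `j`-minor for `j ∈ {1,2,3}`), if and only if the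
vertex set of `G` can be partitioned into `k` cliques. -/
theorem valueRestricted_partition_iff_cliquePartition
    {V : Type*} [Fintype V] (G : SimpleGraph V) (k : ℕ) (hk : 3 ≤ k)
    [LinearOrder (V ⊕ (Fin k × Fin (k + 2)))] :
    (∃ f : (V ⊕ (Fin k × Fin (k + 2))) → Fin k,
        ∀ i : Fin k, ∀ j : ℕ, j = 1 ∨ j = 2 ∨ j = 3 →
          ¬ HasIMinorOn j (voteRel (GPlus G k)) {w | f w = i}) ↔
      CliquePartition G k := by
  constructor
  · rintro ⟨f, hf⟩
    -- every clique H_i has two vertices in a common part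
    have pigeon : ∀ i : Fin k, ∃ (jj : Fin k) (m₁ m₂ : Fin (k + 2)), m₁ ≠ m₂ ∧
        f (Sum.inr (i, m₁)) = jj ∧ f (Sum.inr (i, m₂)) = jj := by
      intro i
      obtain ⟨m₁, m₂, hne, heq⟩ :=
        Fintype.exists_ne_map_eq_of_card_lt (fun m : Fin (k + 2) => f (Sum.inr (i, m)))
          (by simp)
      exact ⟨f (Sum.inr (i, m₂)), m₁, m₂, hne, heq, rfl⟩
    choose P m₁ m₂ hm hP₁ hP₂ using pigeon
    have Pinj : Function.Injective P := by
      intro i i' hii'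
      by_contra hne
      apply hf (P i) 1 (Or.inl rfl)
      exact exists_minor (u := Sum.inr (i, m₁ i)) (v := Sum.inr (i', m₁ i'))
        (w := Sum.inr (i, m₂ i))
        (hP₁ i) (by rw [Set.mem_setOf_eq, hP₁ i', hii']) (hP₂ i)
        (by simp [hne]) (by simp [hm i]) (by simp [Ne.symm hne])
        (by rintro ⟨h, -⟩; exact hne h)
    have Psurj : Function.Surjective P := Finite.surjective_of_injective Pinj
    refine ⟨fun v => f (Sum.inl v), fun x y hxy hne => ?_⟩
    by_contra hadj
    obtain ⟨i, hi⟩ := Psurj (f (Sum.inl x))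
    apply hf (f (Sum.inl x)) 1 (Or.inl rfl)
    exact exists_minor (u := Sum.inl x) (v := Sum.inl y) (w := Sum.inr (i, m₁ i))
      rfl hxy.symm (by rw [Set.mem_setOf_eq, ← hi]; exact hP₁ i)
      (by simp [hne]) (by simp) (by simp) hadj
  · rintro ⟨g, hg⟩
    refine ⟨fun w => Sum.elim g (fun p => p.1) w, fun i j hj => ?_⟩
    apply no_minor_of_clique _ hj
    rintro (x | x) hx (y | y) hy hne
    · exact hg x y (hx.trans hy.symm) (fun h => hne (congrArg Sum.inl h))
    · trivial
    · trivial
    · refine ⟨hx.trans hy.symm, fun h => hne ?_⟩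
      exact congrArg Sum.inr (Prod.ext (hx.trans hy.symm) h)
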